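/- arXiv:1006.4957 — 2 statements merged into one kernel-verified Lean document; each statement's English description precedes it below -/
import Mathlib

section
/- For every real number κ with 0 < κ ≤ 1 and every real t ≥ 0, one has χ_κ(t) + χ'_κ(t)²/(−χ''_κ(t)) ≤ 4κ⁻¹e^{κt}, where χ'_κ(t) = 1 + 1/(2e^{κt} − 1) and χ''_κ(t) = −2κe^{κt}/(2e^{κt} − 1)². -/
open Real MeasureTheory

/-- For `0 < κ ≤ 1`, the function `h_κ(t) = ∫₀ᵗ 1/(2e^{κy} − 1) dy`. -/
noncomputable def hKappa (κ t : ℝ) : ℝ :=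
  ∫ y in (0:ℝ)..t, 1 / (2 * Real.exp (κ * y) - 1)

/-- `χ_κ(t) = 1 + t + h_κ(t)`. -/
noncomputable def chiKappa (κ t : ℝ) : ℝ := 1 + t + hKappa κ t

/-- The first derivative of `χ_κ`: `χ'_κ(t) = 1 + 1/(2e^{κt} − 1)`. -/
noncomputable def chiKappa' (κ t : ℝ) : ℝ := 1 + 1 / (2 * Real.exp (κ * t) - 1)

/-- The second derivative of `χ_κ`: `χ''_κ(t) = −2κe^{κt}/(2e^{κt} − 1)²`. -/
noncomputable def chiKappa'' (κ t : ℝ) : ℝ :=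
  -(2 * κ * Real.exp (κ * t)) / (2 * Real.exp (κ * t) - 1) ^ 2

theorem chiKappa_plus_lambda_bound (κ : ℝ) (hκ0 : 0 < κ) (hκ1 : κ ≤ 1)
    (t : ℝ) (ht : 0 ≤ t) :
    chiKappa κ t + (chiKappa' κ t) ^ 2 / (-(chiKappa'' κ t)) ≤
      4 * κ⁻¹ * Real.exp (κ * t) := by
  have hE1 : (1 : ℝ) ≤ Real.exp (κ * t) := by
    have : (0 : ℝ) ≤ κ * t := mul_nonneg hκ0.le ht
    simpa using Real.exp_le_exp.2 this |>.trans_eq rfl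
  have hE0 : (0 : ℝ) < Real.exp (κ * t) := Real.exp_pos _
  have hd : (1 : ℝ) ≤ 2 * Real.exp (κ * t) - 1 := by linarith
  have hd0 : (2 * Real.exp (κ * t) - 1) ≠ 0 := by positivity
  -- ratio term equals 2 e^{κt} / κ
  have hratio : (chiKappa' κ t) ^ 2 / (-(chiKappa'' κ t)) = 2 * Real.exp (κ * t) / κ := by
    unfold chiKappa' chiKappa''
    rw [neg_div, neg_neg]
    field_simp
    ring
  -- bound h
  have hh : hKappa κ t ≤ t := by
    have hb : ∀ y ∈ Set.uIoc (0:ℝ) t, ‖1 / (2 * Real.exp (κ * y) - 1)‖ ≤ 1 := by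
      intro y hy
      rw [Set.uIoc_of_le ht] at hy
      have hy0 : 0 ≤ y := hy.1.le
      have : (1 : ℝ) ≤ Real.exp (κ * y) := by
        have : (0 : ℝ) ≤ κ * y := mul_nonneg hκ0.le hy0
        simpa using Real.one_le_exp this
      have hdpos : (0:ℝ) < 2 * Real.exp (κ * y) - 1 := by linarith
      rw [norm_div, norm_one, Real.norm_eq_abs, abs_of_pos hdpos, div_le_one hdpos]
      linarith
    have := intervalIntegral.norm_integral_le_of_norm_le_const (C := 1) hb
    unfold hKappa
    calc (∫ y in (0:ℝ)..t, 1 / (2 * Real.exp (κ * y) - 1))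
        ≤ ‖∫ y in (0:ℝ)..t, 1 / (2 * Real.exp (κ * y) - 1)‖ := le_norm_self _
      _ ≤ 1 * |t - 0| := this
      _ = t := by rw [one_mul, sub_zero, abs_of_nonneg ht]
  have hchi : chiKappa κ t ≤ 1 + 2 * t := by
    unfold chiKappa; linarith
  have hexp : 1 + κ * t ≤ Real.exp (κ * t) := by linarith [Real.add_one_le_exp (κ * t)]
  have hκinv : (0:ℝ) < κ⁻¹ := by positivity
  have key : 1 + 2 * t ≤ 2 * κ⁻¹ * Real.exp (κ * t) := by
    have h1 : 2 * κ⁻¹ * (1 + κ * t) ≤ 2 * κ⁻¹ * Real.exp (κ * t) := by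
      apply mul_le_mul_of_nonneg_left hexp (by positivity)
    have h2 : 2 * κ⁻¹ * (1 + κ * t) = 2 * κ⁻¹ + 2 * t := by
      field_simp
    have h3 : (1:ℝ) ≤ 2 * κ⁻¹ := by
      have : (1:ℝ) ≤ κ⁻¹ := one_le_inv₀ hκ0 |>.2 hκ1
      linarith
    linarith
  rw [hratio]
  have : 2 * Real.exp (κ * t) / κ = 2 * κ⁻¹ * Real.exp (κ * t) := by
    rw [div_eq_mul_inv]; ring
  rw [this]
  calc chiKappa κ t + 2 * κ⁻¹ * Real.exp (κ * t)
      ≤ 2 * κ⁻¹ * Real.exp (κ * t) + 2 * κ⁻¹ * Real.exp (κ * t) := by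
        linarith [hchi.trans key]
    _ = 4 * κ⁻¹ * Real.exp (κ * t) := by ring
end

section
/- Let q ≥ 1 be a natural number and A, C ≥ 0 real numbers. Suppose h : ℕ → ℝ is a sequence of nonnegative reals and z ≥ 0 a real number such that: h(0) ≤ A/√q + C/√((q+1)q); for every ℓ with 1 ≤ ℓ ≤ q−1, h(ℓ) ≤ √((ℓ+1)/(q−ℓ))·h(ℓ−1) + √((ℓ+1)!·(q−ℓ−1)!/(q+1)!)·C; and z ≤ √(q+1)·h(q−1) + C. Then z ≤ √(q+1)·A + (q+1)·C. -/
open Real Nat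

private lemma sqrt_step (ℓ m : ℕ) (hm : 1 ≤ m) (D : ℝ) (hD : 0 < D) :
    Real.sqrt (((ℓ:ℝ)+1)/(m:ℝ)) * Real.sqrt (((ℓ.factorial * m.factorial : ℕ) : ℝ) / D)
      = Real.sqrt ((((ℓ+1).factorial * (m-1).factorial : ℕ) : ℝ) / D) := by
  obtain ⟨k, rfl⟩ : ∃ k, m = k + 1 := ⟨m - 1, (Nat.succ_pred_eq_of_pos hm).symm⟩
  rw [← Real.sqrt_mul (by positivity)]
  congr 1
  simp only [Nat.add_sub_cancel]
  push_cast [Nat.factorial_succ]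
  have hk : (0:ℝ) < (k:ℝ) + 1 := by positivity
  field_simp

theorem estim_recursion (q : ℕ) (hq : 1 ≤ q) (A C : ℝ) (hA : 0 ≤ A) (hC : 0 ≤ C)
    (h : ℕ → ℝ) (hnn : ∀ ℓ, 0 ≤ h ℓ) (z : ℝ) (hz0 : 0 ≤ z)
    (h0 : h 0 ≤ A / Real.sqrt q + C / Real.sqrt ((q + 1) * q))
    (hrec : ∀ ℓ : ℕ, 1 ≤ ℓ → ℓ ≤ q - 1 →
      h ℓ ≤ Real.sqrt (((ℓ : ℝ) + 1) / ((q : ℝ) - ℓ)) * h (ℓ - 1) +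
        Real.sqrt (((ℓ + 1).factorial * (q - ℓ - 1).factorial : ℝ) /
          ((q + 1).factorial : ℝ)) * C)
    (hzle : z ≤ Real.sqrt ((q : ℝ) + 1) * h (q - 1) + C) :
    z ≤ Real.sqrt ((q : ℝ) + 1) * A + ((q : ℝ) + 1) * C := by
  have hqR : (0:ℝ) < (q:ℝ) := by exact_mod_cast hq
  have claim : ∀ ℓ, ℓ ≤ q - 1 →
      h ℓ ≤ Real.sqrt ((((ℓ+1).factorial * (q-ℓ-1).factorial : ℕ) : ℝ) / (q.factorial : ℝ)) * A
        + ((ℓ:ℝ)+1) * Real.sqrt ((((ℓ+1).factorial * (q-ℓ-1).factorial : ℕ) : ℝ)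
            / ((q+1).factorial : ℝ)) * C := by
    intro ℓ
    induction ℓ with
    | zero =>
      intro _
      have e1 : (((0+1).factorial * (q-0-1).factorial : ℕ) : ℝ) / (q.factorial : ℝ)
          = 1 / (q:ℝ) := by
        obtain ⟨k, rfl⟩ : ∃ k, q = k + 1 := ⟨q - 1, (Nat.succ_pred_eq_of_pos hq).symm⟩
        simp only [Nat.sub_zero, Nat.add_sub_cancel]
        push_cast [Nat.factorial_succ, Nat.factorial_one]
        have : (0:ℝ) < (k:ℝ) + 1 := by positivity
        have hf : (0:ℝ) < (k.factorial : ℝ) := by exact_mod_cast k.factorial_pos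
        field_simp
        ring
      have e2 : (((0+1).factorial * (q-0-1).factorial : ℕ) : ℝ) / ((q+1).factorial : ℝ)
          = 1 / (((q:ℝ)+1) * q) := by
        obtain ⟨k, rfl⟩ : ∃ k, q = k + 1 := ⟨q - 1, (Nat.succ_pred_eq_of_pos hq).symm⟩
        simp only [Nat.sub_zero, Nat.add_sub_cancel]
        push_cast [Nat.factorial_succ, Nat.factorial_one]
        have : (0:ℝ) < (k:ℝ) + 1 := by positivity
        have hf : (0:ℝ) < (k.factorial : ℝ) := by exact_mod_cast k.factorial_pos
        field_simp
        ring
      rw [e1, e2]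
      have s1 : Real.sqrt (1 / (q:ℝ)) = 1 / Real.sqrt q := by
        rw [one_div, one_div, Real.sqrt_inv]
      have s2 : Real.sqrt (1 / (((q:ℝ)+1) * q)) = 1 / Real.sqrt (((q:ℝ)+1) * q) := by
        rw [one_div, one_div, Real.sqrt_inv]
      rw [s1, s2]
      calc h 0 ≤ A / Real.sqrt q + C / Real.sqrt ((q + 1) * q) := h0
        _ = 1 / Real.sqrt q * A + ((0:ℕ):ℝ) * C + 1 * (1 / Real.sqrt (((q:ℝ)+1) * q)) * C := by
            push_cast; ring
        _ = _ := by push_cast; ring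
    | succ ℓ ih =>
      intro hle
      have hℓq : ℓ + 1 ≤ q - 1 := hle
      have hℓq' : ℓ ≤ q - 1 := le_trans (Nat.le_succ ℓ) hle
      have hq2 : ℓ + 2 ≤ q := by omega
      have hm : 1 ≤ q - ℓ - 1 := by omega
      have hcast : (q:ℝ) - ((ℓ:ℝ)+1) = ((q - ℓ - 1 : ℕ) : ℝ) := by
        have h1 : q - ℓ - 1 = q - (ℓ + 1) := by omega
        rw [h1, Nat.cast_sub (by omega : ℓ + 1 ≤ q)]
        push_cast; ring
      have hrec' := hrec (ℓ+1) (by omega) hle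
      have ihv := ih hℓq'
      set a := Real.sqrt ((((ℓ+1).factorial * (q-ℓ-1).factorial : ℕ) : ℝ) / (q.factorial : ℝ))
        with ha
      set b := Real.sqrt ((((ℓ+1).factorial * (q-ℓ-1).factorial : ℕ) : ℝ) / ((q+1).factorial : ℝ))
        with hb
      set s := Real.sqrt ((((ℓ:ℝ)+1)+1) / ((q:ℝ) - ((ℓ:ℝ)+1))) with hs
      have hsnn : 0 ≤ s := Real.sqrt_nonneg _
      have hqfac : (0:ℝ) < (q.factorial : ℝ) := by exact_mod_cast q.factorial_pos
      have hq1fac : (0:ℝ) < ((q+1).factorial : ℝ) := by exact_mod_cast (q+1).factorial_pos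
      have hsa : s * a = Real.sqrt ((((ℓ+2).factorial * (q-(ℓ+1)-1).factorial : ℕ) : ℝ)
          / (q.factorial : ℝ)) := by
        rw [hs, ha, hcast,
          show q - (ℓ+1) - 1 = q - ℓ - 1 - 1 from by omega,
          show ((ℓ:ℝ)+1+1) = ((ℓ+1:ℕ):ℝ)+1 from by push_cast; ring]
        exact sqrt_step (ℓ+1) (q-ℓ-1) hm (q.factorial : ℝ) hqfac
      have hsb : s * b = Real.sqrt ((((ℓ+2).factorial * (q-(ℓ+1)-1).factorial : ℕ) : ℝ)
          / ((q+1).factorial : ℝ)) := by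
        rw [hs, hb, hcast,
          show q - (ℓ+1) - 1 = q - ℓ - 1 - 1 from by omega,
          show ((ℓ:ℝ)+1+1) = ((ℓ+1:ℕ):ℝ)+1 from by push_cast; ring]
        exact sqrt_step (ℓ+1) (q-ℓ-1) hm ((q+1).factorial : ℝ) hq1fac
      have key : h (ℓ+1) ≤ s * (a * A + ((ℓ:ℝ)+1) * b * C)
          + Real.sqrt ((((ℓ+2).factorial * (q-(ℓ+1)-1).factorial : ℕ) : ℝ)
              / ((q+1).factorial : ℝ)) * C := by
        have h2 : s * h ℓ ≤ s * (a * A + ((ℓ:ℝ)+1) * b * C) := by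
          apply mul_le_mul_of_nonneg_left ihv hsnn
        have h3 := hrec'
        simp only [Nat.add_sub_cancel] at h3
        have heq : Real.sqrt ((((ℓ+1) + 1).factorial * (q - (ℓ+1) - 1).factorial : ℝ) /
            ((q + 1).factorial : ℝ)) = Real.sqrt ((((ℓ+2).factorial * (q-(ℓ+1)-1).factorial : ℕ) : ℝ)
              / ((q+1).factorial : ℝ)) := by
          congr 1
          push_cast
          ring
        push_cast at h3
        calc h (ℓ+1) ≤ s * h ℓ + Real.sqrt ((((ℓ+2).factorial * (q-(ℓ+1)-1).factorial : ℕ) : ℝ)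
              / ((q+1).factorial : ℝ)) * C := by
              rw [← heq]
              convert h3 using 4
              all_goals push_cast; ring
          _ ≤ _ := by linarith
      rw [mul_add, ← mul_assoc, ← mul_assoc, hsa] at key
      rw [show s * (((ℓ:ℝ)+1) * b) = ((ℓ:ℝ)+1) * (s * b) from by ring, hsb] at key
      calc h (ℓ+1) ≤ _ := key
        _ = _ := by push_cast; ring
  -- now apply at ℓ = q - 1
  have hfin := claim (q-1) le_rfl
  have e3 : (q - 1) + 1 = q := Nat.succ_pred_eq_of_pos hq
  have e4 : q - (q-1) - 1 = 0 := by omega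
  rw [e3, e4] at hfin
  simp only [Nat.factorial_zero, Nat.mul_one] at hfin
  have s3 : Real.sqrt ((q.factorial : ℝ) / (q.factorial : ℝ)) = 1 := by
    have hqfac : (0:ℝ) < (q.factorial : ℝ) := by exact_mod_cast q.factorial_pos
    rw [div_self (ne_of_gt hqfac), Real.sqrt_one]
  have s4 : Real.sqrt ((q.factorial : ℝ) / ((q+1).factorial : ℝ)) = 1 / Real.sqrt ((q:ℝ)+1) := by
    have : ((q.factorial : ℝ)) / ((q+1).factorial : ℝ) = 1 / ((q:ℝ)+1) := by
      rw [Nat.factorial_succ]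
      push_cast
      have hqfac : (0:ℝ) < (q.factorial : ℝ) := by exact_mod_cast q.factorial_pos
      field_simp
    rw [this, one_div, one_div, Real.sqrt_inv]
  rw [s3, s4] at hfin
  have hc1 : ((q-1 : ℕ):ℝ) + 1 = (q:ℝ) := by
    push_cast [Nat.cast_sub hq]; ring
  rw [hc1] at hfin
  have hsq : Real.sqrt ((q:ℝ)+1) * (1 / Real.sqrt ((q:ℝ)+1)) = 1 := by
    have hne : Real.sqrt ((q:ℝ)+1) ≠ 0 := by positivity
    rw [mul_one_div, div_self hne]
  have hstep : z ≤ Real.sqrt ((q:ℝ)+1) * (1 * A + (q:ℝ) * (1 / Real.sqrt ((q:ℝ)+1)) * C) + C := by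
    have := mul_le_mul_of_nonneg_left hfin (Real.sqrt_nonneg ((q:ℝ)+1))
    linarith
  have expand : Real.sqrt ((q:ℝ)+1) * (1 * A + (q:ℝ) * (1 / Real.sqrt ((q:ℝ)+1)) * C) + C
      = Real.sqrt ((q:ℝ)+1) * A + (q:ℝ) * (Real.sqrt ((q:ℝ)+1) * (1 / Real.sqrt ((q:ℝ)+1))) * C + C := by
    ring
  rw [expand, hsq] at hstep
  linarith
end
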